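/- For any function f : X → Y, the map Path_∼(f) : Path_∼(X) → Path_∼(Y), defined by Path_∼(f)[p] = [f ∘ p], is order preserving: if ♮p ⪯ ♮q then ♮(f ∘ p) ⪯ ♮(f ∘ q), for all paths p, q on X. -/

import Mathlib

open scoped Classical ENNReal

namespace PaperBB

/-! ## Paths -/

/-- Words over the alphabet `A_τ = A ∪ {τ}`; `none` plays the role of the silent action `τ`. -/
abbrev Word (A : Type*) := List (Option A)

/-- A path on `X`: a function whose codomain is `X` and whose domain is the set of all
prefixes of some word `σ ∈ A_τ*`. -/
structure Path (A : Type*) (X : Type*) where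
  word : Word A
  fn : {σ : Word A // σ <+: word} → X

namespace Path

variable {A X Y : Type*}

theorem prefixSnoc (σ : Word A) (a : Option A) : σ <+: σ ++ [a] := ⟨[a], rfl⟩

theorem nilPrefix (w : Word A) : ([] : Word A) <+: w := ⟨w, rfl⟩

/-- The value `p(ε)` of a path at the empty word. -/
def start (p : Path A X) : X := p.fn ⟨[], nilPrefix _⟩

/-- The trace of a path: the maximal word in its domain. -/
def trace (p : Path A X) : Word A := p.word

/-- The last state reached by a path: `last p = p (trace p)`. -/
def last (p : Path A X) : X := p.fn ⟨p.word, List.prefix_refl _⟩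

/-- `Path(f)(p) = f ∘ p`. -/
def map (f : X → Y) (p : Path A X) : Path A Y := ⟨p.word, fun σ => f (p.fn σ)⟩

/-- The prefix order on paths: `p ⪯ q` iff `dom p ⊆ dom q` and `q` agrees with `p` on `dom p`. -/
def le (p q : Path A X) : Prop :=
  ∃ h : p.word <+: q.word, ∀ (σ : Word A) (hσ : σ <+: p.word),
    q.fn ⟨σ, hσ.trans h⟩ = p.fn ⟨σ, hσ⟩

/-- The strict prefix order on paths. -/
def lt (p q : Path A X) : Prop := p.le q ∧ p ≠ q

/-- `φ` is a stutter basis for the path `p`. -/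
def IsStutterBasis (p : Path A X) (φ : {σ : Word A // σ <+: p.word} → Word A) : Prop :=
  φ ⟨[], nilPrefix _⟩ = [] ∧
  (∀ (σ : Word A) (h : σ ++ [(none : Option A)] <+: p.word),
      (p.fn ⟨σ ++ [none], h⟩ = p.fn ⟨σ, (prefixSnoc σ none).trans h⟩ →
        φ ⟨σ ++ [none], h⟩ = φ ⟨σ, (prefixSnoc σ none).trans h⟩) ∧
      (p.fn ⟨σ ++ [none], h⟩ ≠ p.fn ⟨σ, (prefixSnoc σ none).trans h⟩ →
        φ ⟨σ ++ [none], h⟩ = φ ⟨σ, (prefixSnoc σ none).trans h⟩ ++ [none])) ∧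
  (∀ (σ : Word A) (a : A) (h : σ ++ [some a] <+: p.word),
      φ ⟨σ ++ [some a], h⟩ = φ ⟨σ, (prefixSnoc σ (some a)).trans h⟩ ++ [some a])

/-- Auxiliary recursion computing the stutter basis of `p` on the prefix of length `n`. -/
noncomputable def stutterWordAux (p : Path A X) : ℕ → Word A
  | 0 => []
  | n + 1 =>
    if h : n < p.word.length then
      if (p.word.get ⟨n, h⟩) = none ∧
          p.fn ⟨p.word.take (n + 1), List.take_prefix _ _⟩ =
            p.fn ⟨p.word.take n, List.take_prefix _ _⟩ then
        stutterWordAux p n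
      else stutterWordAux p n ++ [p.word.get ⟨n, h⟩]
    else []

/-- The (unique) stutter basis of a path `p`. -/
noncomputable def stutterBasis (p : Path A X) (σ : {σ : Word A // σ <+: p.word}) : Word A :=
  stutterWordAux p σ.1.length

/-- The stutter invariant path `♮p` relative to `p`: its domain is the image of the stutter
basis `φ` and it satisfies `♮p ∘ φ = p`. -/
noncomputable def stutter (p : Path A X) : Path A X where
  word := stutterBasis p ⟨p.word, List.prefix_refl _⟩
  fn := fun w =>
    haveI : Nonempty {σ : Word A // σ <+: p.word} := ⟨⟨[], nilPrefix _⟩⟩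
    p.fn (Function.invFun (stutterBasis p) w.1)

end Path

/-- Stutter equivalence of paths: `p ∼ q` iff `♮p = ♮q`. -/
def StutterEquiv {A X : Type*} (p q : Path A X) : Prop := p.stutter = q.stutter

instance pathSetoid (A X : Type*) : Setoid (Path A X) :=
  ⟨StutterEquiv, ⟨fun _ => rfl, Eq.symm, Eq.trans⟩⟩

/-- The set `Path_∼(X)` of paths up to stutter equivalence. -/
abbrev PathQuot (A X : Type*) := Quotient (pathSetoid A X)

/-- The quotient map `π : Path(X) → Path_∼(X)`. -/
def PathQuot.mk {A X : Type*} (p : Path A X) : PathQuot A X := Quotient.mk _ p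

/-- `Path_∼(f)[p] = [f ∘ p]`. -/
noncomputable def PathQuot.map {A X Y : Type*} (f : X → Y) (c : PathQuot A X) : PathQuot A Y :=
  PathQuot.mk (Path.map f c.out)

/-- The order on `Path_∼(X)`: `[p] ⪯ [q]` iff `♮p ⪯ ♮q`. -/
def PathQuot.le {A X : Type*} (c d : PathQuot A X) : Prop :=
  ∃ p q : Path A X, PathQuot.mk p = c ∧ PathQuot.mk q = d ∧ p.stutter.le q.stutter

/-- The set of words of the shape `τ*aτ*`. -/
def TauStarATauStar {A : Type*} (a : A) (w : Word A) : Prop :=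
  ∃ n m : ℕ, w = List.replicate n none ++ some a :: List.replicate m none

/-! ## Prefix orders, the sobrification `X∞`, Scott topology, valuations -/

section OrderTheory

variable {Z : Type*}

/-- Downward-closed subsets: the closed sets of the Alexandroff topology. -/
def IsDownClosed [Preorder Z] (C : Set Z) : Prop :=
  ∀ ⦃x⦄, x ∈ C → ∀ ⦃y⦄, y ≤ x → y ∈ C

/-- Irreducible closed subsets of the Alexandroff topology. -/
def IsIrredClosed [Preorder Z] (C : Set Z) : Prop :=
  IsDownClosed C ∧ C.Nonempty ∧
    ∀ C₁ C₂ : Set Z, IsDownClosed C₁ → IsDownClosed C₂ → C = C₁ ∪ C₂ → C = C₁ ∨ C = C₂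

/-- A set is non-sober if it is irreducible and closed (w.r.t. the Alexandroff topology) but is
not the closure (the principal ideal) of any single point. -/
def NonSober [Preorder Z] (C : Set Z) : Prop :=
  IsIrredClosed C ∧ ¬ ∃ x : Z, C = {y | y ≤ x}

/-- `X∞`: `X` together with a fresh limit point `∞_C` for every non-sober `C ⊆ X`. -/
def Extended (Z : Type*) [Preorder Z] := Z ⊕ {C : Set Z // NonSober C}

/-- The order `⪯'` on `X∞` extending `⪯` by `∞_C ⪯' ∞_C` and `x ⪯' ∞_C` for `x ∈ C`. -/
def extLE [Preorder Z] : Extended Z → Extended Z → Prop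
  | Sum.inl x, Sum.inl y => x ≤ y
  | Sum.inl x, Sum.inr C => x ∈ C.1
  | Sum.inr _, Sum.inl _ => False
  | Sum.inr C, Sum.inr D => C = D

instance [PartialOrder Z] : PartialOrder (Extended Z) where
  le := extLE
  le_refl a := by
    cases a with
    | inl x => exact le_refl x
    | inr C => exact rfl
  le_trans a b c hab hbc := by
    cases a with
    | inl x =>
      cases b with
      | inl y =>
        cases c with
        | inl z => exact le_trans hab hbc
        | inr C => exact C.2.1.1 hbc hab
      | inr C =>
        cases c with
        | inl z => exact False.elim hbc
        | inr D => exact (show C = D from hbc) ▸ hab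
    | inr C =>
      cases b with
      | inl y => exact False.elim hab
      | inr D =>
        cases c with
        | inl z => exact False.elim hbc
        | inr E => exact (show C = D from hab).trans (show D = E from hbc)
  le_antisymm a b hab hba := by
    cases a with
    | inl x =>
      cases b with
      | inl y => exact congrArg Sum.inl (le_antisymm hab hba)
      | inr C => exact False.elim hba
    | inr C =>
      cases b with
      | inl y => exact False.elim hab
      | inr D => exact congrArg Sum.inr hab

/-- Scott-open subsets: upward closed and inaccessible by directed joins. -/
def ScottOpen {W : Type*} [Preorder W] (U : Set W) : Prop :=
  (∀ ⦃x y⦄, x ∈ U → x ≤ y → y ∈ U) ∧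
  ∀ D : Set W, D.Nonempty → DirectedOn (· ≤ ·) D → ∀ s : W, IsLUB D s → s ∈ U →
    (D ∩ U).Nonempty

/-- Scott-closed subsets. -/
def ScottClosed {W : Type*} [Preorder W] (C : Set W) : Prop := ScottOpen Cᶜ

end OrderTheory

section Valuation

variable {W : Type*}

/-- A valuation on a collection `Op` of open sets: strict, monotone and modular. -/
def IsValuationOn (Op : Set (Set W)) (μ : Set W → ℝ≥0∞) : Prop :=
  μ ∅ = 0 ∧
  (∀ U ∈ Op, ∀ V ∈ Op, U ⊆ V → μ U ≤ μ V) ∧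
  (∀ U ∈ Op, ∀ V ∈ Op, μ U + μ V = μ (U ∪ V) + μ (U ∩ V))

/-- Scott continuity of a valuation: it commutes with unions of directed families of opens. -/
def IsScottContinuousOn (Op : Set (Set W)) (μ : Set W → ℝ≥0∞) : Prop :=
  ∀ 𝒟 : Set (Set W), 𝒟.Nonempty → (∀ U ∈ 𝒟, U ∈ Op) → DirectedOn (· ⊆ ·) 𝒟 →
    μ (⋃₀ 𝒟) = ⨆ U ∈ 𝒟, μ U

/-- Local finiteness: every point has a finitely valued open neighbourhood. -/
def IsLocallyFiniteOn (Op : Set (Set W)) (μ : Set W → ℝ≥0∞) : Prop :=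
  ∀ x : W, ∃ U ∈ Op, x ∈ U ∧ μ U < ⊤

/-- The open sets of the Alexandroff topology of a preorder: the upward-closed sets. -/
def UpClosedSets (W : Type*) [Preorder W] : Set (Set W) :=
  {U | ∀ ⦃x y⦄, x ∈ U → x ≤ y → y ∈ U}

/-- The Scott-open subsets of a preorder. -/
def ScottOpens (W : Type*) [Preorder W] : Set (Set W) := {U | ScottOpen U}

end Valuation

/-- The separation closure `U* = {x ∈ U | cl {x} ∩ U = {x}}` of a subset of a
topological space. -/
def sepClosure {W : Type*} [TopologicalSpace W] (U : Set W) : Set W :=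
  {x ∈ U | closure {x} ∩ U = {x}}

/-! ## Fully probabilistic transition systems -/

section Prob

variable {A X : Type*}

/-- A fully probabilistic transition system. -/
structure FPTS (A X : Type*) where
  P : X → Option A → X → ℝ≥0∞
  le_one : ∀ x a y, P x a y ≤ 1
  finite_support : ∀ x : X, {q : Option A × X | 0 < P x q.1 q.2}.Finite
  total : ∀ x : X,
    (∑' q : Option A × X, P x q.1 q.2) = 0 ∨ (∑' q : Option A × X, P x q.1 q.2) = 1

/-- `p` is an execution from `x`. -/
def IsExec (S : FPTS A X) (x : X) (p : Path A X) : Prop :=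
  p.start = x ∧
  ∀ (σ : Word A) (a : Option A) (h : σ ++ [a] <+: p.word),
    0 < S.P (p.fn ⟨σ, (Path.prefixSnoc σ a).trans h⟩) a (p.fn ⟨σ ++ [a], h⟩)

/-- The weight function `μ_P` on paths: the product of the transition probabilities along an
execution, and `0` on paths that are not executions. -/
noncomputable def pathWeight (S : FPTS A X) (p : Path A X) : ℝ≥0∞ :=
  if ∃ x : X, IsExec S x p then
    ∏ i : Fin p.word.length,
      S.P (p.fn ⟨p.word.take i.1, List.take_prefix _ _⟩)
          (p.word.get i)
          (p.fn ⟨p.word.take (i.1 + 1), List.take_prefix _ _⟩)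
  else 0

/-- `x →_L Y`: executions from `x` with trace in `L`, last state in `Y`, and no strict prefix
witnessing the same. -/
def stepSet (S : FPTS A X) (x : X) (L : Set (Word A)) (Y : Set X) : Set (Path A X) :=
  {p | IsExec S x p ∧ p.trace ∈ L ∧ p.last ∈ Y ∧
       ∀ q : Path A X, q.lt p → q.trace ∈ L → q.last ∉ Y}

/-- `x ⇒_L Y`: paths starting in `x` with trace in `L` and last state in `Y`. -/
def reachSet (x : X) (L : Set (Word A)) (Y : Set X) : Set (Path A X) :=
  {p | p.start = x ∧ p.trace ∈ L ∧ p.last ∈ Y}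

/-- The separation closure `U*` of a set of paths (w.r.t. the prefix order). -/
def sepMin (U : Set (Path A X)) : Set (Path A X) :=
  {p ∈ U | ∀ q ∈ U, q.le p → q = p}

/-- The upward-closed sets of paths: the opens of the Alexandroff topology on `Path(X)`. -/
def pathUpSets (A X : Type*) : Set (Set (Path A X)) :=
  {U | ∀ p ∈ U, ∀ q : Path A X, p.le q → q ∈ U}

end Prob

/-! ## Labelled transition systems -/

section LTS

variable {A X : Type}

/-- `p` is an execution of the labelled transition system `Tr` from `x`. -/
def IsExecLTS (Tr : X → Option A → X → Prop) (x : X) (p : Path A X) : Prop :=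
  p.start = x ∧
  ∀ (σ : Word A) (a : Option A) (h : σ ++ [a] <+: p.word),
    Tr (p.fn ⟨σ, (Path.prefixSnoc σ a).trans h⟩) a (p.fn ⟨σ ++ [a], h⟩)

/-- Branching bisimulation. -/
def IsBranchingBisim (Tr : X → Option A → X → Prop) (R : X → X → Prop) : Prop :=
  Symmetric R ∧
  ∀ (x x' y : X) (a : Option A), Tr x a x' → R x y →
    (a = none ∧ R x' y) ∨
    ∃ y' y'' : X, Relation.ReflTransGen (fun u v => Tr u none v) y y' ∧
      Tr y' a y'' ∧ R x y' ∧ R x' y''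

/-- Two states are branching bisimilar if some branching bisimulation relates them. -/
def BranchingBisimilar (Tr : X → Option A → X → Prop) (x x' : X) : Prop :=
  ∃ R : X → X → Prop, IsBranchingBisim Tr R ∧ R x x'

/-- The path-based coalgebra `α : X → P(Path_∼ X)` of a labelled transition system: the
stutter classes of executions from `x` with trace in `τ*a` (for some `a ∈ A`) or in `τ*`. -/
def ltsAlpha (Tr : X → Option A → X → Prop) (x : X) : Set (PathQuot A X) :=
  {c | ∃ p : Path A X, IsExecLTS Tr x p ∧
    ((∃ (a : A) (n : ℕ), p.word = List.replicate n none ++ [some a]) ∨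
     (∃ n : ℕ, p.word = List.replicate n (none : Option A))) ∧
    c = PathQuot.mk p}

end LTS

section StutterLemmas

namespace Path

variable {A X Y : Type*}

/-- The state of a path after `n` steps. -/
noncomputable def st (p : Path A X) (n : ℕ) : X :=
  p.fn ⟨p.word.take n, List.take_prefix _ _⟩

theorem fn_eq_st (p : Path A X) {σ : Word A} (h : σ <+: p.word) :
    p.fn ⟨σ, h⟩ = p.st σ.length := by
  have htake : p.word.take σ.length = σ := (List.prefix_iff_eq_take.mp h).symm
  have hx : (⟨σ, h⟩ : {σ : Word A // σ <+: p.word}) =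
      ⟨p.word.take σ.length, List.take_prefix _ _⟩ := Subtype.ext htake.symm
  rw [st, ← hx]

theorem st_def (p : Path A X) (n : ℕ) :
    p.st n = p.fn ⟨p.word.take n, List.take_prefix _ _⟩ := rfl

theorem map_st (f : X → Y) (p : Path A X) (n : ℕ) : (p.map f).st n = f (p.st n) := rfl

theorem swa_succ (p : Path A X) (n : ℕ) (h : n < p.word.length) :
    stutterWordAux p (n + 1) =
      if p.word.get ⟨n, h⟩ = none ∧ p.st (n + 1) = p.st n then stutterWordAux p n
      else stutterWordAux p n ++ [p.word.get ⟨n, h⟩] := by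
  simp only [stutterWordAux, st, dif_pos h]
  exact if_congr Iff.rfl rfl rfl

theorem swa_prefix_succ (p : Path A X) (n : ℕ) (h : n < p.word.length) :
    stutterWordAux p n <+: stutterWordAux p (n + 1) := by
  rw [swa_succ p n h]
  split
  · exact List.prefix_refl _
  · exact prefixSnoc _ _

theorem swa_mono (p : Path A X) : ∀ {m n : ℕ}, m ≤ n → n ≤ p.word.length →
    stutterWordAux p m <+: stutterWordAux p n := by
  intro m n
  induction n with
  | zero => intro h _; obtain rfl : m = 0 := Nat.le_zero.mp h; exact List.prefix_refl _
  | succ n ih =>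
    intro hmn hn
    rcases Nat.lt_or_ge m (n + 1) with h | h
    · exact (ih (Nat.lt_succ_iff.mp h) ((Nat.le_succ n).trans hn)).trans
        (swa_prefix_succ p n hn)
    · obtain rfl : m = n + 1 := le_antisymm hmn h
      exact List.prefix_refl _

theorem st_eq_of_swa_succ_eq (p : Path A X) {n : ℕ} (h : n < p.word.length)
    (he : stutterWordAux p (n + 1) = stutterWordAux p n) : p.st (n + 1) = p.st n := by
  rw [swa_succ p n h] at he
  split_ifs at he with hc
  · exact hc.2
  · exfalso
    have := congrArg List.length he
    simp at this

theorem swa_fiber_le (p : Path A X) : ∀ {m n : ℕ}, m ≤ n → n ≤ p.word.length →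
    stutterWordAux p m = stutterWordAux p n → p.st m = p.st n := by
  intro m n
  induction n with
  | zero => intro h _ _; obtain rfl : m = 0 := Nat.le_zero.mp h; rfl
  | succ n ih =>
    intro hmn hn he
    rcases Nat.lt_or_ge m (n + 1) with h | h
    · have hm : m ≤ n := Nat.lt_succ_iff.mp h
      have hn' : n ≤ p.word.length := (Nat.le_succ n).trans hn
      have h1 : stutterWordAux p m <+: stutterWordAux p n := swa_mono p hm hn'
      have h2 : stutterWordAux p n <+: stutterWordAux p (n + 1) := swa_prefix_succ p n hn
      have hlen : (stutterWordAux p n).length = (stutterWordAux p (n + 1)).length :=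
        le_antisymm h2.length_le (by rw [← he]; exact h1.length_le)
      have heq : stutterWordAux p n = stutterWordAux p (n + 1) := h2.eq_of_length hlen
      have hst : p.st (n + 1) = p.st n := st_eq_of_swa_succ_eq p hn heq.symm
      rw [hst]
      exact ih hm hn' (he.trans heq.symm)
    · obtain rfl : m = n + 1 := le_antisymm hmn h
      rfl

theorem swa_fiber (p : Path A X) {m n : ℕ} (hm : m ≤ p.word.length)
    (hn : n ≤ p.word.length) (he : stutterWordAux p m = stutterWordAux p n) :
    p.st m = p.st n := by
  rcases le_total m n with h | h
  · exact swa_fiber_le p h hn he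
  · exact (swa_fiber_le p h hm he.symm).symm

theorem swa_range (p : Path A X) : ∀ n, n ≤ p.word.length → ∀ w : Word A,
    w <+: stutterWordAux p n → ∃ m, m ≤ n ∧ stutterWordAux p m = w := by
  intro n
  induction n with
  | zero =>
    intro _ w hw
    refine ⟨0, le_rfl, ?_⟩
    simpa [stutterWordAux] using (List.prefix_nil.mp hw).symm
  | succ n ih =>
    intro hn w hw
    have hlt : n < p.word.length := hn
    have hn' : n ≤ p.word.length := hlt.le
    rw [swa_succ p n hlt] at hw
    split_ifs at hw with hc
    · obtain ⟨m, hm, he⟩ := ih hn' w hw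
      exact ⟨m, hm.trans (Nat.le_succ n), he⟩
    · rcases Nat.lt_or_ge (stutterWordAux p n).length w.length with h | h
      · -- w must be the whole thing
        have hlen : w.length = (stutterWordAux p n ++ [p.word.get ⟨n, hlt⟩]).length := by
          have h1 := hw.length_le
          simp only [List.length_append, List.length_singleton] at h1 ⊢
          omega
        refine ⟨n + 1, le_rfl, ?_⟩
        rw [swa_succ p n hlt, if_neg hc]
        exact (hw.eq_of_length hlen).symm
      · have hw' : w <+: stutterWordAux p n :=
          List.prefix_of_prefix_length_le hw (prefixSnoc _ _) h
        obtain ⟨m, hm, he⟩ := ih hn' w hw'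
        exact ⟨m, hm.trans (Nat.le_succ n), he⟩

theorem stutter_word (p : Path A X) :
    p.stutter.word = stutterWordAux p p.word.length := rfl

theorem stutter_fn_eq (p : Path A X) {w : Word A} (hw : w <+: p.stutter.word)
    {n : ℕ} (hn : n ≤ p.word.length) (he : stutterWordAux p n = w) :
    p.stutter.fn ⟨w, hw⟩ = p.st n := by
  have hne : Nonempty {σ : Word A // σ <+: p.word} := ⟨⟨[], nilPrefix _⟩⟩
  show p.fn (Function.invFun (stutterBasis p) w) = p.st n
  have hlen : (p.word.take n).length = n := by
    rw [List.length_take, min_eq_left hn]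
  have hex : ∃ σ' : {σ : Word A // σ <+: p.word}, stutterBasis p σ' = w :=
    ⟨⟨p.word.take n, List.take_prefix _ _⟩, by simp only [stutterBasis, hlen]; exact he⟩
  have hσ : stutterBasis p (Function.invFun (stutterBasis p) w) = w :=
    Function.invFun_eq hex
  set σ := Function.invFun (stutterBasis p) w with hσdef
  have hlen' : σ.1.length ≤ p.word.length := σ.2.length_le
  have h1 : p.fn σ = p.st σ.1.length := by
    have := fn_eq_st p σ.2
    convert this using 2
  rw [h1]
  exact swa_fiber p hlen' hn (hσ.trans he.symm)

theorem map_le {p q : Path A X} (f : X → Y) (h : p.le q) : (p.map f).le (q.map f) := by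
  obtain ⟨h1, h2⟩ := h
  exact ⟨h1, fun σ hσ => congrArg f (h2 σ hσ)⟩

theorem ext' {p q : Path A X} (hw : p.word = q.word)
    (hf : ∀ (σ : Word A) (h1 : σ <+: p.word) (h2 : σ <+: q.word),
      p.fn ⟨σ, h1⟩ = q.fn ⟨σ, h2⟩) : p = q := by
  cases p with
  | mk w1 f1 =>
    cases q with
    | mk w2 f2 =>
      dsimp at hw
      subst hw
      have : f1 = f2 := funext fun σ => by
        obtain ⟨s, hs⟩ := σ
        exact hf s hs hs
      rw [this]

/-- Monotonicity of the stutter-normalization. -/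
theorem stutter_le_of_le {p q : Path A X} (h : p.le q) : p.stutter.le q.stutter := by
  obtain ⟨hpre, hfn⟩ := h
  have hLp : p.word.length ≤ q.word.length := hpre.length_le
  -- states agree
  have hst : ∀ n, n ≤ p.word.length → q.st n = p.st n := by
    intro n hn
    have htake : q.word.take n = p.word.take n := by
      have h1 : p.word.take n <+: q.word := (List.take_prefix _ _).trans hpre
      have h2 : q.word.take n <+: q.word := List.take_prefix _ _
      have hl1 : (p.word.take n).length = n := by rw [List.length_take, min_eq_left hn]
      have hl2 : (q.word.take n).length = n := by
        rw [List.length_take, min_eq_left (hn.trans hLp)]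
      exact ((List.prefix_of_prefix_length_le h2 h1 (by rw [hl1, hl2])).eq_of_length
        (by rw [hl1, hl2]))
    have hx : (⟨q.word.take n, List.take_prefix _ _⟩ : {σ : Word A // σ <+: q.word}) =
        ⟨p.word.take n, ((List.take_prefix _ _).trans hpre)⟩ := Subtype.ext htake
    rw [st_def q, hx, st_def p]
    exact hfn (p.word.take n) (List.take_prefix _ _)
  -- letters agree
  have hget : ∀ (n : ℕ) (hn : n < p.word.length),
      q.word.get ⟨n, hn.trans_le hLp⟩ = p.word.get ⟨n, hn⟩ := by
    intro n hn
    simp only [List.get_eq_getElem]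
    exact (hpre.getElem hn).symm
  -- stutter words agree
  have hswa : ∀ n, n ≤ p.word.length → stutterWordAux q n = stutterWordAux p n := by
    intro n
    induction n with
    | zero => intro _; rfl
    | succ n ih =>
      intro hn
      have hlt : n < p.word.length := hn
      rw [swa_succ q n (hlt.trans_le hLp), swa_succ p n hlt, hget n hlt,
        hst (n + 1) hn, hst n hlt.le, ih hlt.le]
  have hword : p.stutter.word <+: q.stutter.word := by
    rw [stutter_word, stutter_word, ← hswa p.word.length le_rfl]
    exact swa_mono q hLp le_rfl
  refine ⟨hword, fun σ hσ => ?_⟩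
  obtain ⟨m, hm, he⟩ := swa_range p p.word.length le_rfl σ hσ
  rw [stutter_fn_eq p hσ hm he, stutter_fn_eq q (hσ.trans hword) (hm.trans hLp)
    ((hswa m hm).trans he)]
  exact hst m hm

/-- `♮(f ∘ ♮p) = ♮(f ∘ p)`. -/
theorem stutter_map_stutter (f : X → Y) (p : Path A X) :
    ((p.map f)).stutter = ((p.stutter).map f).stutter := by
  set L := p.word.length with hL
  have hQword : ((p.stutter).map f).word = stutterWordAux p L := rfl
  have hPword : (p.map f).word = p.word := rfl
  -- state of Q at (u n).length is f (p.st n)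
  have hQst : ∀ n, n ≤ L → ((p.stutter).map f).st (stutterWordAux p n).length = f (p.st n) := by
    intro n hn
    have hpref : stutterWordAux p n <+: p.stutter.word := swa_mono p hn le_rfl
    have htake : p.stutter.word.take (stutterWordAux p n).length = stutterWordAux p n :=
      (List.prefix_iff_eq_take.mp hpref).symm
    rw [map_st]
    congr 1
    have hx : (⟨p.stutter.word.take (stutterWordAux p n).length, List.take_prefix _ _⟩ :
        {σ : Word A // σ <+: p.stutter.word}) = ⟨stutterWordAux p n, hpref⟩ :=
      Subtype.ext htake
    rw [st_def, hx]
    exact stutter_fn_eq p hpref hn rfl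
  -- key: stutter words of P and Q line up
  have key : ∀ n, n ≤ L → stutterWordAux (p.map f) n =
      stutterWordAux ((p.stutter).map f) (stutterWordAux p n).length := by
    intro n
    induction n with
    | zero => intro _; rfl
    | succ n ih =>
      intro hn
      have hlt : n < L := hn
      have hn' : n ≤ L := hlt.le
      have hPst1 : (p.map f).st (n + 1) = f (p.st (n + 1)) := rfl
      have hPst0 : (p.map f).st n = f (p.st n) := rfl
      have hPget : (p.map f).word.get ⟨n, hlt⟩ = p.word.get ⟨n, hlt⟩ := rfl
      rw [swa_succ (p.map f) n hlt, hPget, hPst1, hPst0, ih hn']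
      by_cases hstut : p.word.get ⟨n, hlt⟩ = none ∧ p.st (n + 1) = p.st n
      · -- stuttering step of p: u (n+1) = u n
        have hu : stutterWordAux p (n + 1) = stutterWordAux p n := by
          rw [swa_succ p n hlt, if_pos hstut]
        rw [hu, if_pos ⟨hstut.1, congrArg f hstut.2⟩]
      · have hu : stutterWordAux p (n + 1) =
            stutterWordAux p n ++ [p.word.get ⟨n, hlt⟩] := by
          rw [swa_succ p n hlt, if_neg hstut]
        have hupre : stutterWordAux p (n + 1) <+: stutterWordAux p L := swa_mono p hn le_rfl
        have hulen : (stutterWordAux p (n + 1)).length = (stutterWordAux p n).length + 1 := by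
          rw [hu]; simp
        have hk : (stutterWordAux p n).length < ((p.stutter).map f).word.length := by
          rw [hQword]
          have := hupre.length_le
          omega
        have hQget : ((p.stutter).map f).word.get ⟨(stutterWordAux p n).length, hk⟩ =
            p.word.get ⟨n, hlt⟩ := by
          simp only [List.get_eq_getElem]
          have hilt : (stutterWordAux p n).length < (stutterWordAux p (n + 1)).length := by
            omega
          have h1 := hupre.getElem hilt
          rw [show (((p.stutter).map f).word)[(stutterWordAux p n).length] =
            (stutterWordAux p L)[(stutterWordAux p n).length]'(by
              have := hupre.length_le; omega) from rfl, ← h1]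
          have h2 : stutterWordAux p (n + 1) = stutterWordAux p n ++ [p.word.get ⟨n, hlt⟩] := hu
          simp only [h2]
          simp
        have hQ1 : ((p.stutter).map f).st ((stutterWordAux p n).length + 1) =
            f (p.st (n + 1)) := by
          rw [← hulen]; exact hQst (n + 1) hn
        have hQ0 : ((p.stutter).map f).st (stutterWordAux p n).length = f (p.st n) :=
          hQst n hn'
        rw [hu]
        simp only [List.length_append, List.length_singleton]
        rw [swa_succ ((p.stutter).map f) (stutterWordAux p n).length hk, hQget, hQ1, hQ0]
  -- assemble the path equality
  have hwordQ : ((p.stutter).map f).word.length = (stutterWordAux p L).length := by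
    rw [hQword]
  apply ext'
  · show stutterWordAux (p.map f) (p.map f).word.length =
      stutterWordAux ((p.stutter).map f) ((p.stutter).map f).word.length
    rw [show (p.map f).word.length = L from rfl, hwordQ]
    exact key L le_rfl
  · intro σ h1 h2
    obtain ⟨n, hn, he⟩ := swa_range (p.map f) (p.map f).word.length le_rfl σ h1
    have hn' : n ≤ L := hn
    have hQlen : (stutterWordAux p n).length ≤ ((p.stutter).map f).word.length := by
      rw [hQword]
      exact (swa_mono p hn' le_rfl).length_le
    have heQ : stutterWordAux ((p.stutter).map f) (stutterWordAux p n).length = σ :=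
      (key n hn').symm.trans he
    rw [stutter_fn_eq (p.map f) h1 hn he,
      stutter_fn_eq ((p.stutter).map f) h2 hQlen heQ]
    exact (hQst n hn').symm

end Path

end StutterLemmas

theorem stmt9 {A X Y : Type*} (f : X → Y) :
    (∀ p q : Path A X, p.stutter.le q.stutter →
      (p.map f).stutter.le ((q.map f).stutter)) ∧
    (∀ c d : PathQuot A X, PathQuot.le c d →
      PathQuot.le (PathQuot.map f c) (PathQuot.map f d)) := by
  have main : ∀ p q : Path A X, p.stutter.le q.stutter →
      (p.map f).stutter.le ((q.map f).stutter) := by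
    intro p q h
    have hm : (p.stutter.map f).le (q.stutter.map f) := Path.map_le f h
    have := Path.stutter_le_of_le hm
    rwa [← Path.stutter_map_stutter f p, ← Path.stutter_map_stutter f q] at this
  refine ⟨main, ?_⟩
  rintro c d ⟨p, q, hp, hq, hle⟩
  refine ⟨(c.out).map f, (d.out).map f, rfl, rfl, ?_⟩
  have hcp : c.out.stutter = p.stutter :=
    Quotient.exact (c.out_eq.trans hp.symm)
  have hdq : d.out.stutter = q.stutter :=
    Quotient.exact (d.out_eq.trans hq.symm)
  have e1 : ((c.out).map f).stutter = (p.map f).stutter := by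
    rw [Path.stutter_map_stutter f c.out, hcp, ← Path.stutter_map_stutter f p]
  have e2 : ((d.out).map f).stutter = (q.map f).stutter := by
    rw [Path.stutter_map_stutter f d.out, hdq, ← Path.stutter_map_stutter f q]
  rw [e1, e2]
  exact main p q hle

end PaperBB
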